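/- The solution of the linearized vorticity equation around the one-jet Kolmogorov type flow, ∂_t ω = ν(Δω + 2ω) − a₁ ∂_φ (I + 2Δ^{−1})ω on L²₀(S²), with initial data ω(0), is given by ω(t) = Σ_{n≥1} Σ_{|m|≤n} e^{−σ_{n,m} t} (ω(0), Y_n^m) Y_n^m where σ_{n,m} = ν(λ_n − 2) + i a₁ m (1 − 2/λ_n); consequently ‖ω(t) − Π₁ω(0)‖_{L²} ≤ e^{−4νt}‖ω(0)‖_{L²} where Π₁ is the orthogonal projection onto span{Y_1^0, Y_1^{±1}}. -/

import Mathlib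

open Real

/-- Eigenvalue `λ_n = n(n+1)` of `−Δ` on the unit sphere `S²`. -/
def lam (n : ℕ) : ℝ := n * (n + 1)

/-- The recurrence coefficient `a_n^m = √((n−m)(n+m)/((2n−1)(2n+1)))` in
`cos θ · Y_n^m = a_n^m Y_{n−1}^m + a_{n+1}^m Y_{n+1}^m`. -/
noncomputable def aCoef (n : ℕ) (m : ℤ) : ℝ :=
  Real.sqrt ((((n : ℝ) - (m : ℝ)) * ((n : ℝ) + (m : ℝ))) / ((2 * (n : ℝ) - 1) * (2 * (n : ℝ) + 1)))

/-- The decay rate `σ_{n,m} = ν(λ_n − 2) + i a₁ m (1 − 2/λ_n)`. -/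
noncomputable def sigma1 (ν a₁ : ℝ) (n : ℕ) (m : ℤ) : ℂ :=
  ((ν * (lam n - 2) : ℝ) : ℂ) + Complex.I * (a₁ : ℂ) * (m : ℂ) * ((1 - 2 / lam n : ℝ) : ℂ)

/-- Solution formula `E:Li1_Sol` and linear stability for the one-jet Kolmogorov type
flow.  In the expansion `ω(t) = Σ ω_{n,m}(t) Y_n^m`, the linearized equation
`∂_t ω = ν(Δ + 2)ω − a₁ ∂_φ(I + 2Δ^{−1})ω` is equivalent to the mode-wise ODEs
`ω_{n,m}' = −σ_{n,m} ω_{n,m}` (each `Y_n^m` is an eigenfunction of the generator with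
eigenvalue `−σ_{n,m}`): the solution is `ω_{n,m}(t) = e^{−σ_{n,m}t} ω_{n,m}(0)`, and by
Parseval `‖ω(t) − Π₁ω(0)‖_{L²} ≤ e^{−4νt}‖ω(0)‖_{L²}`, where `Π₁` is the orthogonal
projection onto `span{Y_1^0, Y_1^{±1}}` (the modes with `n = 1`). -/
theorem stmt_16 (ν a₁ : ℝ) (hν : 0 < ν) (c : ℕ × ℤ → ℂ)
    (hsupp : ∀ p : ℕ × ℤ, (p.1 = 0 ∨ p.1 < p.2.natAbs) → c p = 0)
    (hsum : Summable fun p : ℕ × ℤ => ‖c p‖ ^ 2)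
    (ω : ℝ → ℕ × ℤ → ℂ) (hω0 : ω 0 = c)
    (hode : ∀ (p : ℕ × ℤ) (t : ℝ),
      HasDerivAt (fun s => ω s p) (-(sigma1 ν a₁ p.1 p.2) * ω t p) t) :
    (∀ (t : ℝ) (p : ℕ × ℤ), ω t p = Complex.exp (-(sigma1 ν a₁ p.1 p.2) * (t : ℂ)) * c p) ∧
    ∀ t : ℝ, 0 ≤ t →
      Real.sqrt (∑' p : ℕ × ℤ, ‖ω t p - (if p.1 = 1 then c p else 0)‖ ^ 2)
        ≤ Real.exp (-(4 * ν) * t) * Real.sqrt (∑' p : ℕ × ℤ, ‖c p‖ ^ 2) := by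
  have hsol : ∀ (t : ℝ) (p : ℕ × ℤ),
      ω t p = Complex.exp (-(sigma1 ν a₁ p.1 p.2) * (t : ℂ)) * c p := by
    intro t p
    set σ := sigma1 ν a₁ p.1 p.2 with hσ
    have key : ∀ s : ℝ, HasDerivAt (fun u : ℝ => ω u p * Complex.exp (σ * u)) 0 s := by
      intro s
      have h2 : HasDerivAt (fun u : ℝ => Complex.exp (σ * u)) (σ * Complex.exp (σ * s)) s := by
        have := (((hasDerivAt_id ((s : ℝ) : ℂ)).const_mul σ).cexp).comp_ofReal
        simpa [mul_comm] using this
      have h3 := (hode p s).mul h2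
      refine h3.congr_deriv ?_
      rw [hσ]
      ring
    have hdiff : Differentiable ℝ (fun u : ℝ => ω u p * Complex.exp (σ * u)) :=
      fun s => (key s).differentiableAt
    have hconst : ω t p * Complex.exp (σ * t) = ω 0 p * Complex.exp (σ * 0) :=
      is_const_of_deriv_eq_zero hdiff (fun s => (key s).deriv) t 0
    rw [hω0] at hconst
    simp only [Complex.ofReal_zero, mul_zero, Complex.exp_zero, mul_one] at hconst
    have hinv : Complex.exp (-σ * (t : ℂ)) * Complex.exp (σ * (t : ℂ)) = 1 := by
      rw [← Complex.exp_add]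
      have h0 : -σ * (t : ℂ) + σ * (t : ℂ) = 0 := by ring
      rw [h0, Complex.exp_zero]
    calc ω t p = (Complex.exp (-σ * (t : ℂ)) * Complex.exp (σ * (t : ℂ))) * ω t p := by
          rw [hinv, one_mul]
      _ = Complex.exp (-σ * (t : ℂ)) * (ω t p * Complex.exp (σ * (t : ℂ))) := by ring
      _ = Complex.exp (-σ * (t : ℂ)) * c p := by rw [hconst]
  refine ⟨hsol, ?_⟩
  intro t ht
  set K := Real.exp (-(4 * ν) * t) with hK
  have hK0 : 0 ≤ K := Real.exp_nonneg _
  have hpt : ∀ p : ℕ × ℤ,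
      ‖ω t p - (if p.1 = 1 then c p else 0)‖ ^ 2 ≤ K ^ 2 * ‖c p‖ ^ 2 := by
    rintro ⟨n, m⟩
    rcases Nat.lt_or_ge n 2 with hn | hn
    · interval_cases n
      · have hc : c (0, m) = 0 := hsupp (0, m) (Or.inl rfl)
        simp [hsol, hc]
      · have hσ0 : sigma1 ν a₁ 1 m = 0 := by
          simp [sigma1, lam]
          norm_num
        simp [hsol, hσ0]
        positivity
    · have hn2 : (2 : ℝ) ≤ (n : ℝ) := by exact_mod_cast hn
      have hlam : 6 ≤ lam n := by
        unfold lam; nlinarith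
      have hre : (sigma1 ν a₁ n m).re = ν * (lam n - 2) := by
        simp [sigma1, Complex.add_re, Complex.mul_re, Complex.mul_im,
          Complex.I_re, Complex.I_im]
      have hnorm : ‖ω t (n, m)‖ ≤ K * ‖c (n, m)‖ := by
        rw [hsol t (n, m), norm_mul]
        have hexp : ‖Complex.exp (-(sigma1 ν a₁ n m) * (t : ℂ))‖ ≤ K := by
          rw [Complex.norm_exp]
          have hre2 : (-(sigma1 ν a₁ n m) * (t : ℂ)).re = -(ν * (lam n - 2)) * t := by
            simp [Complex.mul_re, Complex.neg_re, Complex.neg_im, hre]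
          rw [hre2, hK]
          apply Real.exp_le_exp.2
          nlinarith [mul_nonneg (mul_nonneg hν.le ht) (by linarith : (0:ℝ) ≤ lam n - 6)]
        exact mul_le_mul_of_nonneg_right hexp (norm_nonneg _)
      have hne1 : n ≠ 1 := by omega
      rw [show ((n, m) : ℕ × ℤ).1 = n from rfl, if_neg hne1, sub_zero]
      calc ‖ω t (n, m)‖ ^ 2 ≤ (K * ‖c (n, m)‖) ^ 2 :=
            pow_le_pow_left₀ (norm_nonneg _) hnorm 2
        _ = K ^ 2 * ‖c (n, m)‖ ^ 2 := by ring
  have hs2 : Summable (fun p : ℕ × ℤ => K ^ 2 * ‖c p‖ ^ 2) := hsum.mul_left _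
  have hsL : Summable (fun p : ℕ × ℤ => ‖ω t p - (if p.1 = 1 then c p else 0)‖ ^ 2) :=
    Summable.of_nonneg_of_le (fun p => by positivity) hpt hs2
  have hts := Summable.tsum_le_tsum hpt hsL hs2
  calc Real.sqrt (∑' p : ℕ × ℤ, ‖ω t p - (if p.1 = 1 then c p else 0)‖ ^ 2)
      ≤ Real.sqrt (∑' p : ℕ × ℤ, K ^ 2 * ‖c p‖ ^ 2) := Real.sqrt_le_sqrt hts
    _ = K * Real.sqrt (∑' p : ℕ × ℤ, ‖c p‖ ^ 2) := by
        rw [tsum_mul_left, Real.sqrt_mul (sq_nonneg K), Real.sqrt_sq hK0]
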